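/- arXiv:1408.1839 — 3 statements merged into one kernel-verified Lean document; each statement's English description precedes it below -/
import Mathlib

section
/- Let n ≥ 1, let A and B be n×n complex matrices, let P₀ be a fixed rank-one orthogonal projection on ℂⁿ, and let μₙ be the normalized Haar probability measure on the unitary group U(n). Then ∫_{U(n)} conj(tr(A·(U P₀ Uᴴ))) · tr(B·(U P₀ Uᴴ)) dμₙ(U) = (tr(Aᴴ B) + tr(Aᴴ)·tr(B)) / (n(n+1)). (This is the paper's trace-integral formula ∫_{P(ℂⁿ)} conj(ρ) ρ' dν = (tr(A†B) + tr(A†)tr(B))/(n+1) for ρ(p)=tr(Ap), ρ'(p)=tr(Bp), with ν = n·μₙ.) -/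
open MeasureTheory Matrix Kronecker

noncomputable instance (k : Type*) [Fintype k] [DecidableEq k] :
    MeasurableSpace (Matrix.unitaryGroup k ℂ) := borel _

/-- `p` is a rank-one orthogonal projection. -/
def IsRankOneProj {k : Type*} [Fintype k] [DecidableEq k] (p : Matrix k k ℂ) : Prop :=
  p.IsHermitian ∧ p * p = p ∧ p.rank = 1

namespace TraceIntegral

open ComplexConjugate

instance (k : Type*) [Fintype k] [DecidableEq k] :
    BorelSpace (Matrix.unitaryGroup k ℂ) := ⟨rfl⟩

instance (k : Type*) [Fintype k] [DecidableEq k] :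
    MeasurableMul (Matrix.unitaryGroup k ℂ) :=
  ⟨fun c => (continuous_mul_left c).measurable, fun c => (continuous_mul_right c).measurable⟩

variable {n : ℕ}

noncomputable def w (u : Fin n → ℂ) (U : Matrix.unitaryGroup (Fin n) ℂ) : Fin n → ℂ :=
  (U : Matrix (Fin n) (Fin n) ℂ) *ᵥ u

noncomputable def mono (u : Fin n → ℂ) (a b c d : Fin n)
    (U : Matrix.unitaryGroup (Fin n) ℂ) : ℂ :=
  w u U a * conj (w u U b) * (w u U c * conj (w u U d))

lemma continuous_w (u : Fin n → ℂ) (a : Fin n) :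
    Continuous fun U : Matrix.unitaryGroup (Fin n) ℂ => w u U a := by
  simp only [w, Matrix.mulVec, dotProduct]
  refine continuous_finset_sum _ fun j _ => ?_
  have h1 : Continuous (fun M : Matrix (Fin n) (Fin n) ℂ => M a j) :=
    continuous_apply_apply a j
  exact (h1.comp continuous_subtype_val).mul continuous_const

lemma entry_norm_le (U : Matrix.unitaryGroup (Fin n) ℂ) (a j : Fin n) :
    ‖(U : Matrix (Fin n) (Fin n) ℂ) a j‖ ≤ 1 := by
  have h : (U : Matrix (Fin n) (Fin n) ℂ) * star (U : Matrix (Fin n) (Fin n) ℂ) = 1 :=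
    Matrix.mem_unitaryGroup_iff.mp U.2
  have h1 := congrFun (congrFun h a) a
  simp only [Matrix.mul_apply, Matrix.one_apply_eq, Matrix.star_apply,
    Matrix.conjTranspose_apply] at h1
  have h3 : ((∑ k, Complex.normSq ((U : Matrix (Fin n) (Fin n) ℂ) a k) : ℝ) : ℂ) = 1 := by
    push_cast
    simpa [Complex.mul_conj] using h1
  have h2 : ∑ k, Complex.normSq ((U : Matrix (Fin n) (Fin n) ℂ) a k) = 1 := by
    exact_mod_cast h3
  have h4 : Complex.normSq ((U : Matrix (Fin n) (Fin n) ℂ) a j) ≤ 1 := by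
    rw [← h2]
    exact Finset.single_le_sum (f := fun k => Complex.normSq ((U : Matrix (Fin n) (Fin n) ℂ) a k))
      (fun k _ => Complex.normSq_nonneg _) (Finset.mem_univ j)
  have h5 : ‖(U : Matrix (Fin n) (Fin n) ℂ) a j‖ ^ 2 ≤ 1 := by
    rwa [← Complex.sq_norm] at h4
  nlinarith [norm_nonneg ((U : Matrix (Fin n) (Fin n) ℂ) a j)]

lemma w_norm_le (u : Fin n → ℂ) (U : Matrix.unitaryGroup (Fin n) ℂ) (a : Fin n) :
    ‖w u U a‖ ≤ ∑ j, ‖u j‖ := by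
  simp only [w, Matrix.mulVec, dotProduct]
  refine (norm_sum_le _ _).trans (Finset.sum_le_sum fun j _ => ?_)
  rw [norm_mul]
  calc ‖(U : Matrix (Fin n) (Fin n) ℂ) a j‖ * ‖u j‖ ≤ 1 * ‖u j‖ :=
        mul_le_mul_of_nonneg_right (entry_norm_le U a j) (norm_nonneg _)
    _ = ‖u j‖ := one_mul _

lemma integrable_mono (u : Fin n → ℂ) (a b c d : Fin n)
    (μ : Measure (Matrix.unitaryGroup (Fin n) ℂ)) [IsProbabilityMeasure μ] :
    Integrable (mono u a b c d) μ := by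
  have hc : Continuous (mono u a b c d) := by
    unfold mono
    exact ((continuous_w u a).mul (Complex.continuous_conj.comp (continuous_w u b))).mul
      ((continuous_w u c).mul (Complex.continuous_conj.comp (continuous_w u d)))
  refine ⟨hc.aestronglyMeasurable, HasFiniteIntegral.of_bounded
    (C := (∑ j, ‖u j‖) ^ 4) (Filter.Eventually.of_forall fun U => ?_)⟩
  have hb : ∀ e : Fin n, ‖w u U e‖ ≤ ∑ j, ‖u j‖ := w_norm_le u U
  have h0 : (0:ℝ) ≤ ∑ j, ‖u j‖ := Finset.sum_nonneg fun j _ => norm_nonneg _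
  simp only [mono, norm_mul, RCLike.norm_conj]
  calc ‖w u U a‖ * ‖w u U b‖ * (‖w u U c‖ * ‖w u U d‖)
      ≤ (∑ j, ‖u j‖) * (∑ j, ‖u j‖) * ((∑ j, ‖u j‖) * (∑ j, ‖u j‖)) := by
        gcongr <;> first | exact hb _ | exact norm_nonneg _
    _ = (∑ j, ‖u j‖) ^ 4 := by ring


variable (μ : Measure (Matrix.unitaryGroup (Fin n) ℂ))
  [IsProbabilityMeasure μ] [μ.IsMulLeftInvariant]

noncomputable def T (u : Fin n → ℂ) (a b c d : Fin n) : ℂ :=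
  ∫ U, mono u a b c d U ∂μ

lemma T_inv (u : Fin n → ℂ) (g : Matrix.unitaryGroup (Fin n) ℂ) (a b c d : Fin n) :
    T μ u a b c d =
      ∫ U, ((g.1 *ᵥ w u U) a * conj ((g.1 *ᵥ w u U) b)
        * ((g.1 *ᵥ w u U) c * conj ((g.1 *ᵥ w u U) d))) ∂μ := by
  rw [T, ← integral_mul_left_eq_self (mono u a b c d) g]
  congr 1; funext U
  simp only [mono, w, Matrix.UnitaryGroup.mul_val, ← Matrix.mulVec_mulVec]

lemma T_swap_right (u : Fin n → ℂ) (a b c d : Fin n) :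
    T μ u a b c d = T μ u a d c b := by
  unfold T; congr 1; funext U; unfold mono; ring

lemma T_swap_pairs (u : Fin n → ℂ) (a b c d : Fin n) :
    T μ u a b c d = T μ u c d a b := by
  unfold T; congr 1; funext U; unfold mono; ring


lemma T_vanish (u : Fin n → ℂ) (m a b c d : Fin n)
    (hm : ((if a = m then 1 else 0) + (if c = m then 1 else 0) : ℕ)
        ≠ (if b = m then 1 else 0) + (if d = m then 1 else 0)) :
    T μ u a b c d = 0 := by
  classical
  set dI : Fin n → ℂ := fun k => if k = m then Complex.I else 1 with hdI
  have hmem : Matrix.diagonal dI ∈ Matrix.unitaryGroup (Fin n) ℂ := by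
    rw [Matrix.mem_unitaryGroup_iff, Matrix.star_eq_conjTranspose,
      Matrix.diagonal_conjTranspose, Matrix.diagonal_mul_diagonal]
    ext i j
    by_cases hij : i = j
    · subst hij
      by_cases hi : i = m <;>
        simp [hdI, hi, Matrix.diagonal_apply_eq, Matrix.one_apply,
          Complex.mul_conj, Complex.normSq_I]
    · simp [Matrix.diagonal_apply_ne _ hij, Matrix.one_apply, hij]
  have h1 := T_inv μ u ⟨Matrix.diagonal dI, hmem⟩ a b c d
  simp only [Matrix.mulVec_diagonal] at h1
  have key : ∫ U, (dI a * w u U a * conj (dI b * w u U b)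
        * (dI c * w u U c * conj (dI d * w u U d))) ∂μ
      = (dI a * conj (dI b) * (dI c * conj (dI d))) * T μ u a b c d := by
    unfold T
    rw [← integral_const_mul]
    congr 1; funext U; unfold mono
    simp only [_root_.map_mul]; ring
  have h2 := h1.trans key
  have hφ : dI a * conj (dI b) * (dI c * conj (dI d)) ≠ 1 := by
    by_cases ha : a = m <;> by_cases hb : b = m <;> by_cases hc : c = m <;>
      by_cases hd : d = m <;>
      simp only [hdI, ha, hb, hc, hd, if_true, if_false, ite_true, ite_false,
        Complex.conj_I, RingHom.map_one, one_mul, mul_one] at hm ⊢ <;>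
      first
        | (exact absurd rfl hm)
        | norm_num [Complex.ext_iff, Complex.I_mul_I]
  have h3 : (1 - dI a * conj (dI b) * (dI c * conj (dI d))) * T μ u a b c d = 0 := by
    rw [sub_mul, one_mul, ← h2, sub_self]
  rcases mul_eq_zero.mp h3 with h | h
  · exact absurd (sub_eq_zero.mp h).symm hφ
  · exact h


lemma T_perm (u : Fin n → ℂ) (σ : Equiv.Perm (Fin n)) (a b c d : Fin n) :
    T μ u a b c d = T μ u (σ a) (σ b) (σ c) (σ d) := by
  classical
  set P : Matrix (Fin n) (Fin n) ℂ := Matrix.of fun i j => if σ i = j then 1 else 0 with hP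
  have hmem : P ∈ Matrix.unitaryGroup (Fin n) ℂ := by
    rw [Matrix.mem_unitaryGroup_iff]
    ext i j
    simp only [Matrix.mul_apply, Matrix.star_apply, Matrix.conjTranspose_apply]
    rw [Finset.sum_eq_single (σ i)]
    · by_cases h : i = j <;>
        simp [hP, h, Matrix.one_apply, (Equiv.injective σ).eq_iff, eq_comm]
    · intro k _ hk
      simp [hP, Ne.symm hk]
    · simp
  have hmv : ∀ (x : Fin n → ℂ) (i : Fin n), (P *ᵥ x) i = x (σ i) := by
    intro x i
    simp [hP, Matrix.mulVec, dotProduct, Finset.sum_ite_eq, ite_mul, one_mul, zero_mul]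
  have h1 := T_inv μ u ⟨P, hmem⟩ a b c d
  simp only [hmv] at h1
  exact h1


lemma w_normalized (u : Fin n → ℂ) (hu : ∑ j, u j * conj (u j) = 1)
    (U : Matrix.unitaryGroup (Fin n) ℂ) :
    ∑ a, w u U a * conj (w u U a) = 1 := by
  have hUU : (U : Matrix (Fin n) (Fin n) ℂ)ᴴ * (U : Matrix (Fin n) (Fin n) ℂ) = 1 := by
    have := Matrix.mem_unitaryGroup_iff'.mp U.2
    rwa [Matrix.star_eq_conjTranspose] at this
  have key : star (w u U) ⬝ᵥ (w u U) = star u ⬝ᵥ u := by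
    unfold w
    rw [Matrix.star_mulVec, dotProduct_mulVec, Matrix.vecMul_vecMul, hUU,
      Matrix.vecMul_one]
  have h1 : ∑ a, w u U a * conj (w u U a) = star (w u U) ⬝ᵥ (w u U) := by
    simp [dotProduct, Pi.star_apply, mul_comm]
  have h2 : star u ⬝ᵥ u = 1 := by
    rw [← hu]
    simp [dotProduct, Pi.star_apply, mul_comm]
  rw [h1, key, h2]

lemma T_sum_rule (u : Fin n → ℂ) (hu : ∑ j, u j * conj (u j) = 1) :
    ∑ p : Fin n × Fin n, T μ u p.1 p.1 p.2 p.2 = 1 := by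
  have h1 : ∑ p : Fin n × Fin n, T μ u p.1 p.1 p.2 p.2
      = ∫ U, (∑ p : Fin n × Fin n, mono u p.1 p.1 p.2 p.2 U) ∂μ :=
    (integral_finset_sum Finset.univ fun p _ => integrable_mono u p.1 p.1 p.2 p.2 μ).symm
  rw [h1]
  have h2 : ∀ U, (∑ p : Fin n × Fin n, mono u p.1 p.1 p.2 p.2 U) = 1 := by
    intro U
    rw [Fintype.sum_prod_type]
    have : ∀ a c : Fin n, mono u a a c c U
        = (w u U a * conj (w u U a)) * (w u U c * conj (w u U c)) := by
      intro a c; unfold mono; ring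
    simp_rw [this]
    rw [← Finset.sum_mul_sum, w_normalized u hu U, one_mul]
  simp_rw [h2]
  simp


lemma r_eq_two_q (u : Fin n → ℂ) (i0 i1 : Fin n) (hne : i0 ≠ i1) :
    T μ u i0 i0 i0 i0 = 2 * T μ u i0 i0 i1 i1 := by
  classical
  set c : ℝ := (Real.sqrt 2)⁻¹ with hc
  have hcr : c ^ 2 = 1/2 := by
    rw [hc, inv_pow, Real.sq_sqrt (by norm_num : (0:ℝ) ≤ 2)]
    norm_num
  have hc4 : ((c:ℂ)) ^ 4 = 1/4 := by
    have : ((c:ℂ)) ^ 4 = (((c ^ 2) ^ 2 : ℝ) : ℂ) := by push_cast; ring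
    rw [this, hcr]; norm_num
  set V : Matrix (Fin n) (Fin n) ℂ := Matrix.of fun i j =>
    if i = i0 then (if j = i0 then (c:ℂ) else if j = i1 then (c:ℂ) else 0)
    else if i = i1 then (if j = i0 then -(c:ℂ) else if j = i1 then (c:ℂ) else 0)
    else if j = i then 1 else 0 with hV
  have hV0 : ∀ j, V i0 j = if j = i0 then (c:ℂ) else if j = i1 then (c:ℂ) else 0 := by
    intro j; simp [hV]
  have hV1 : ∀ j, V i1 j = if j = i0 then -(c:ℂ) else if j = i1 then (c:ℂ) else 0 := by
    intro j; simp [hV, hne.symm]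
  have hVo : ∀ i j, i ≠ i0 → i ≠ i1 → V i j = if j = i then 1 else 0 := by
    intro i j h0 h1; simp [hV, h0, h1]
  have h2c : (c:ℂ) * (c:ℂ) = 1/2 := by
    have := hc4
    rw [show ((c:ℂ))^4 = ((c:ℂ) * (c:ℂ)) * ((c:ℂ) * (c:ℂ)) by ring] at this
    have h2 : ((c:ℂ) * (c:ℂ)) = (((c^2 : ℝ)) : ℂ) := by push_cast; ring
    rw [h2, hcr]; norm_num
  have hmem : V ∈ Matrix.unitaryGroup (Fin n) ℂ := by
    rw [Matrix.mem_unitaryGroup_iff']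
    ext j k
    simp only [Matrix.mul_apply, Matrix.star_apply, Matrix.conjTranspose_apply]
    by_cases hj0 : j = i0
    · rw [hj0]
      rw [← Finset.sum_subset (Finset.subset_univ ({i0, i1} : Finset (Fin n)))
        (fun i _ hi => ?_)]
      · rw [Finset.sum_pair hne]
        by_cases hk0 : k = i0
        · rw [hk0]
          simp [hV0, hV1, hne.symm, Matrix.one_apply, Complex.star_def,
            Complex.conj_ofReal]
          linear_combination 2 * h2c
        · by_cases hk1 : k = i1
          · rw [hk1]
            simp [hV0, hV1, hne, hne.symm, Matrix.one_apply, Complex.star_def,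
              Complex.conj_ofReal]
          · simp [hV0, hV1, hne.symm, hk0, hk1, Matrix.one_apply, Ne.symm hk0,
              Complex.star_def, Complex.conj_ofReal]
      · simp only [Finset.mem_insert, Finset.mem_singleton, not_or] at hi
        rw [hVo i i0 hi.1 hi.2, if_neg (Ne.symm hi.1)]
        simp
    · by_cases hj1 : j = i1
      · rw [hj1]
        rw [← Finset.sum_subset (Finset.subset_univ ({i0, i1} : Finset (Fin n)))
          (fun i _ hi => ?_)]
        · rw [Finset.sum_pair hne]
          by_cases hk0 : k = i0
          · rw [hk0]
            simp [hV0, hV1, hne, hne.symm, Matrix.one_apply, Complex.star_def,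
              Complex.conj_ofReal]
          · by_cases hk1 : k = i1
            · rw [hk1]
              simp [hV0, hV1, hne, hne.symm, Matrix.one_apply, Complex.star_def,
                Complex.conj_ofReal]
              linear_combination 2 * h2c
            · simp [hV0, hV1, hne, hne.symm, hk0, hk1, Matrix.one_apply,
                Ne.symm hk1, Complex.star_def, Complex.conj_ofReal]
        · simp only [Finset.mem_insert, Finset.mem_singleton, not_or] at hi
          rw [hVo i i1 hi.1 hi.2, if_neg (Ne.symm hi.2)]
          simp
      · rw [Finset.sum_eq_single j ?side ?notmem]
        case side =>
          intro i _ hij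
          by_cases hi0 : i = i0
          · rw [hi0]; simp [hV0, hj0, hj1]
          · by_cases hi1 : i = i1
            · rw [hi1]; simp [hV1, hj0, hj1]
            · rw [hVo i j hi0 hi1, if_neg (fun h => hij h.symm)]
              simp
        case notmem => simp
        · rw [hVo j j hj0 hj1, if_pos rfl]
          by_cases hjk : k = j
          · rw [hjk, hVo j j hj0 hj1]
            simp [Matrix.one_apply]
          · rw [Matrix.one_apply, if_neg (Ne.symm hjk)]
            by_cases hk0 : k = i0
            · rw [hk0, hVo j i0 hj0 hj1, if_neg (Ne.symm hj0)]
              simp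
            · by_cases hk1 : k = i1
              · rw [hk1, hVo j i1 hj0 hj1, if_neg (Ne.symm hj1)]
                simp
              · rw [hVo j k hj0 hj1, if_neg hjk]
                simp
  have hrow : ∀ x : Fin n → ℂ, (V *ᵥ x) i0 = (c:ℂ) * x i0 + (c:ℂ) * x i1 := by
    intro x
    simp only [Matrix.mulVec, dotProduct]
    rw [← Finset.sum_subset (Finset.subset_univ ({i0, i1} : Finset (Fin n)))
      (fun j _ hj => ?_)]
    · rw [Finset.sum_pair hne, hV0, hV0]
      simp [hne.symm]
    · simp only [Finset.mem_insert, Finset.mem_singleton, not_or] at hj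
      rw [hV0, if_neg hj.1, if_neg hj.2, zero_mul]
  have h1 := T_inv μ u ⟨V, hmem⟩ i0 i0 i0 i0
  simp only [hrow] at h1
  have hpt : ∀ U, ((c:ℂ) * w u U i0 + (c:ℂ) * w u U i1)
        * (starRingEnd ℂ) ((c:ℂ) * w u U i0 + (c:ℂ) * w u U i1)
        * (((c:ℂ) * w u U i0 + (c:ℂ) * w u U i1)
          * (starRingEnd ℂ) ((c:ℂ) * w u U i0 + (c:ℂ) * w u U i1))
      = ∑ l : Fin 2 × Fin 2 × Fin 2 × Fin 2, (c:ℂ)^4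
          * mono u (![i0,i1] l.1) (![i0,i1] l.2.1) (![i0,i1] l.2.2.1) (![i0,i1] l.2.2.2) U := by
    intro U
    simp only [Fintype.sum_prod_type, Fin.sum_univ_two, Matrix.cons_val_zero,
      Matrix.cons_val_one, Matrix.head_cons, map_add, _root_.map_mul, Complex.conj_ofReal]
    unfold mono
    ring
  have E : T μ u i0 i0 i0 i0 = ∑ l : Fin 2 × Fin 2 × Fin 2 × Fin 2, (c:ℂ)^4
      * T μ u (![i0,i1] l.1) (![i0,i1] l.2.1) (![i0,i1] l.2.2.1) (![i0,i1] l.2.2.2) := by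
    rw [h1]
    refine (integral_congr_ae (Filter.Eventually.of_forall hpt)).trans ?_
    rw [integral_finset_sum Finset.univ
      (fun l _ => ((integrable_mono u _ _ _ _ μ).const_mul _))]
    simp only [integral_const_mul]
    rfl
  simp only [Fintype.sum_prod_type, Fin.sum_univ_two, Matrix.cons_val_zero,
    Matrix.cons_val_one, Matrix.head_cons] at E
  have hz : ∀ a b c d : Fin n,
      ((if a = i0 then 1 else 0) + (if c = i0 then 1 else 0) : ℕ)
        ≠ ((if b = i0 then 1 else 0) + (if d = i0 then 1 else 0)) →
      T μ u a b c d = 0 := fun a b c d h => T_vanish μ u i0 a b c d h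
  rw [hz i0 i0 i0 i1 (by simp [hne, hne.symm]),
      hz i0 i0 i1 i0 (by simp [hne, hne.symm]),
      hz i0 i1 i0 i0 (by simp [hne, hne.symm]),
      hz i0 i1 i0 i1 (by simp [hne, hne.symm]),
      hz i0 i1 i1 i1 (by simp [hne, hne.symm]),
      hz i1 i0 i0 i0 (by simp [hne, hne.symm]),
      hz i1 i0 i1 i0 (by simp [hne, hne.symm]),
      hz i1 i0 i1 i1 (by simp [hne, hne.symm]),
      hz i1 i1 i0 i1 (by simp [hne, hne.symm]),
      hz i1 i1 i1 i0 (by simp [hne, hne.symm])] at E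
  have e1 : T μ u i1 i1 i1 i1 = T μ u i0 i0 i0 i0 := by
    have h := T_perm μ u (Equiv.swap i0 i1) i0 i0 i0 i0
    simp only [Equiv.swap_apply_left] at h
    exact h.symm
  have e2 : T μ u i1 i1 i0 i0 = T μ u i0 i0 i1 i1 := by
    have h := T_perm μ u (Equiv.swap i0 i1) i0 i0 i1 i1
    simp only [Equiv.swap_apply_left, Equiv.swap_apply_right] at h
    exact h.symm
  have e3 : T μ u i0 i1 i1 i0 = T μ u i0 i0 i1 i1 := by
    rw [T_swap_right]
  have e4 : T μ u i1 i0 i0 i1 = T μ u i0 i0 i1 i1 := by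
    rw [T_swap_pairs]; exact e3
  rw [e1, e2, e3, e4, hc4] at E
  linear_combination 2 * E


lemma pairperm (a c a' c' : Fin n) (h : a ≠ c) (h' : a' ≠ c') :
    ∃ σ : Equiv.Perm (Fin n), σ a = a' ∧ σ c = c' := by
  classical
  have hs1c : (Equiv.swap a a') c ≠ a' := by
    by_cases h1 : c = a'
    · subst h1
      rw [Equiv.swap_apply_right]
      exact h
    · rw [Equiv.swap_apply_of_ne_of_ne (Ne.symm h) h1]
      exact h1
  refine ⟨(Equiv.swap ((Equiv.swap a a') c) c') * (Equiv.swap a a'), ?_, ?_⟩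
  · have h1 : (Equiv.swap a a') a = a' := Equiv.swap_apply_left a a'
    simp only [Equiv.Perm.mul_apply, h1]
    exact Equiv.swap_apply_of_ne_of_ne (Ne.symm hs1c) h'
  · simp only [Equiv.Perm.mul_apply]
    exact Equiv.swap_apply_left _ _

lemma T_value (hn : 0 < n) (u : Fin n → ℂ) (hu : ∑ j, u j * conj (u j) = 1)
    (a b c d : Fin n) :
    T μ u a b c d = ((if a = b then (1:ℂ) else 0) * (if c = d then (1:ℂ) else 0)
        + (if a = d then (1:ℂ) else 0) * (if c = b then (1:ℂ) else 0))
      / ((n : ℂ) * ((n : ℂ) + 1)) := by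
  classical
  set i0 : Fin n := ⟨0, hn⟩ with hi0
  have hrall : ∀ x : Fin n, T μ u x x x x = T μ u i0 i0 i0 i0 := by
    intro x
    have h := T_perm μ u (Equiv.swap i0 x) i0 i0 i0 i0
    simp only [Equiv.swap_apply_left] at h
    exact h.symm
  -- values of r and q
  have hnz : (n:ℂ) * ((n:ℂ) + 1) ≠ 0 := by
    have h1 : (n:ℂ) ≠ 0 := Nat.cast_ne_zero.mpr (by omega)
    have h2 : ((n:ℂ) + 1) ≠ 0 := by
      have : (((n+1 : ℕ)) : ℂ) ≠ 0 := Nat.cast_ne_zero.mpr (by omega)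
      push_cast at this
      exact this
    exact mul_ne_zero h1 h2
  have hsum := T_sum_rule μ u hu
  have hvals : (∀ x : Fin n, T μ u x x x x = 2 / ((n:ℂ) * ((n:ℂ) + 1)))
      ∧ (∀ x y : Fin n, x ≠ y → T μ u x x y y = 1 / ((n:ℂ) * ((n:ℂ) + 1))) := by
    by_cases hlt : 1 < n
    · set i1 : Fin n := ⟨1, hlt⟩ with hi1
      have hne : i0 ≠ i1 := by simp [hi0, hi1, Fin.ext_iff]
      set q := T μ u i0 i0 i1 i1 with hqdef
      have hqall : ∀ x y : Fin n, x ≠ y → T μ u x x y y = q := by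
        intro x y hxy
        obtain ⟨σ, hσ1, hσ2⟩ := pairperm i0 i1 x y hne hxy
        have h := T_perm μ u σ i0 i0 i1 i1
        rw [hσ1, hσ2] at h
        exact h.symm
      have hr2 : T μ u i0 i0 i0 i0 = 2 * q := r_eq_two_q μ u i0 i1 hne
      have hTite : ∀ p : Fin n × Fin n, T μ u p.1 p.1 p.2 p.2
          = if p.1 = p.2 then T μ u i0 i0 i0 i0 else q := by
        intro p
        by_cases h : p.1 = p.2
        · rw [if_pos h, h]; exact hrall _
        · rw [if_neg h]; exact hqall _ _ h
      simp_rw [hTite] at hsum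
      rw [Fintype.sum_prod_type] at hsum
      have inner : ∀ x : Fin n, (∑ y : Fin n, if x = y then T μ u i0 i0 i0 i0 else q)
          = T μ u i0 i0 i0 i0 + ((n:ℂ) - 1) * q := by
        intro x
        have hsplit : ∀ y, (if x = y then T μ u i0 i0 i0 i0 else q)
            = q + (if x = y then T μ u i0 i0 i0 i0 - q else 0) := by
          intro y; by_cases h : x = y <;> simp [h]
        simp_rw [hsplit, Finset.sum_add_distrib, Finset.sum_const, Finset.sum_ite_eq,
          Finset.mem_univ, if_true, Finset.card_univ, Fintype.card_fin, nsmul_eq_mul]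
        ring
      simp_rw [inner, Finset.sum_const, Finset.card_univ, Fintype.card_fin,
        nsmul_eq_mul, hr2] at hsum
      -- hsum : (n:ℂ) * (2*q + ((n:ℂ)-1)*q) = 1
      have key : (n:ℂ) * ((n:ℂ) + 1) * q = 1 := by linear_combination hsum
      have hq_val : q = 1 / ((n:ℂ) * ((n:ℂ) + 1)) := by
        rw [eq_div_iff hnz]
        linear_combination key
      constructor
      · intro x
        rw [hrall x, hr2, hq_val]; ring
      · intro x y hxy
        rw [hqall x y hxy, hq_val]
    · have hn1 : n = 1 := by omega
      subst hn1
      have hall : ∀ x : Fin 1, x = i0 := fun x => Subsingleton.elim x i0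
      have hsum1 : T μ u i0 i0 i0 i0 = 1 := by
        rw [← hsum]
        rw [Fintype.sum_prod_type]
        simp only [Fin.sum_univ_one]
        rw [hall 0]
      constructor
      · intro x
        rw [hrall x, hsum1]
        norm_num
      · intro x y hxy
        exact absurd (Subsingleton.elim x y) hxy
  -- main case analysis
  by_cases hsupp : (a = b ∧ c = d) ∨ (a = d ∧ c = b)
  · rcases hsupp with ⟨hab, hcd⟩ | ⟨had, hcb⟩
    · subst hab; subst hcd
      by_cases hac : a = c
      · subst hac
        rw [hvals.1 a]
        norm_num
      · rw [hvals.2 a c hac]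
        simp [hac, Ne.symm hac]
    · subst had; subst hcb
      rw [T_swap_right]
      by_cases hac : a = c
      · subst hac
        rw [hvals.1 a]
        norm_num
      · rw [hvals.2 a c hac]
        simp [hac, Ne.symm hac]
  · -- vanishing case
    have hex : ∃ m : Fin n, ((if a = m then 1 else 0) + (if c = m then 1 else 0) : ℕ)
        ≠ ((if b = m then 1 else 0) + (if d = m then 1 else 0)) := by
      by_contra hall
      push_neg at hall
      apply hsupp
      by_cases hba : b = a
      · have h2 := hall c
        left
        refine ⟨hba.symm, ?_⟩
        by_cases hdc : d = c
        · exact hdc.symm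
        · exfalso
          rw [hba] at h2
          split_ifs at h2 <;> simp_all <;> omega
      · have h1 := hall a
        have hca : ¬ c = a := by
          by_contra hca
          rw [hca] at h1
          split_ifs at h1 <;> simp_all <;> omega
        have hda : d = a := by
          by_contra hda
          split_ifs at h1 <;> simp_all <;> omega
        right
        refine ⟨hda.symm, ?_⟩
        have h2 := hall c
        rw [hda] at h2
        by_cases hbc : b = c
        · exact hbc.symm
        · exfalso
          split_ifs at h2 <;> simp_all <;> omega
    obtain ⟨m, hm⟩ := hex
    rw [T_vanish μ u m a b c d hm]
    have hs1 : ¬(a = b ∧ c = d) := fun h => hsupp (Or.inl h)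
    have hs2 : ¬(a = d ∧ c = b) := fun h => hsupp (Or.inr h)
    have e1 : (if a = b then (1:ℂ) else 0) * (if c = d then (1:ℂ) else 0) = 0 := by
      rcases not_and_or.mp hs1 with h | h <;> simp [h]
    have e2 : (if a = d then (1:ℂ) else 0) * (if c = b then (1:ℂ) else 0) = 0 := by
      rcases not_and_or.mp hs2 with h | h <;> simp [h]
    rw [e1, e2]
    norm_num


lemma exists_unit_vec (P : Matrix (Fin n) (Fin n) ℂ)
    (hH : P.IsHermitian) (hidem : P * P = P) (hrank : P.rank = 1) :
    ∃ u : Fin n → ℂ, (∀ i j, P i j = u i * conj (u j)) ∧ ∑ j, u j * conj (u j) = 1 := by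
  classical
  rw [Matrix.rank] at hrank
  obtain ⟨w', hw'0, hw'span⟩ := finrank_eq_one_iff'.mp hrank
  set w : Fin n → ℂ := (w' : Fin n → ℂ) with hwdef
  have hw0 : w ≠ 0 := fun h => hw'0 (Subtype.ext h)
  have hcol : ∀ x : Fin n → ℂ, ∃ cx : ℂ, P *ᵥ x = cx • w := by
    intro x
    obtain ⟨cx, hcx⟩ := hw'span ⟨P *ᵥ x, by
      refine ⟨x, ?_⟩
      rw [Matrix.mulVecLin_apply]⟩
    refine ⟨cx, ?_⟩
    have := congrArg (Subtype.val) hcx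
    simpa using this.symm
  choose cfun hcfun using hcol
  set cc : Fin n → ℂ := fun j => cfun (Pi.single j 1) with hcc
  have hPcol : ∀ i j, P i j = cc j * w i := by
    intro i j
    have hspec := hcfun (Pi.single j 1)
    rw [Matrix.mulVec_single] at hspec
    have := congrFun hspec i
    simpa [hcc, mul_comm] using this
  obtain ⟨i₀, hwi0⟩ : ∃ i, w i ≠ 0 := by
    by_contra hcon
    push_neg at hcon
    exact hw0 (funext hcon)
  have hsym : ∀ i j, P i j = conj (P j i) := by
    intro i j
    have h := congrFun (congrFun hH i) j
    simp only [Matrix.conjTranspose_apply] at h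
    simpa using h.symm
  set l : ℂ := conj (cc i₀) / w i₀ with hl
  have hc_eq : ∀ j, cc j = l * conj (w j) := by
    intro j
    have h1 : P i₀ j = conj (P j i₀) := hsym i₀ j
    rw [hPcol i₀ j, hPcol j i₀, _root_.map_mul] at h1
    rw [hl]
    field_simp
    linear_combination h1
  have hP : ∀ i j, P i j = l * w i * conj (w j) := by
    intro i j
    rw [hPcol i j, hc_eq j]; ring
  set s : ℂ := ∑ k, w k * conj (w k) with hs
  have hwc : w i₀ * conj (w i₀) ≠ 0 := by
    rw [Complex.mul_conj]
    exact_mod_cast (Complex.normSq_pos.mpr hwi0).ne'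
  have hl0 : l ≠ 0 := by
    intro hl0
    apply hw0
    obtain ⟨y, hy⟩ := w'.2
    rw [Matrix.mulVecLin_apply] at hy
    funext i
    have h2 : (P *ᵥ y) i = w i := congrFun hy i
    have h3 : (P *ᵥ y) i = ∑ j, P i j * y j := rfl
    have h4 : (P *ᵥ y) i = 0 := by
      rw [h3]
      apply Finset.sum_eq_zero
      intro j _
      rw [hP i j, hl0]
      ring
    rw [← h2, h4]
    simp
  have hE : l * l * (w i₀ * conj (w i₀)) * s = l * (w i₀ * conj (w i₀)) := by
    have h1 := congrFun (congrFun hidem i₀) i₀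
    rw [Matrix.mul_apply] at h1
    calc l * l * (w i₀ * conj (w i₀)) * s
        = ∑ k, P i₀ k * P k i₀ := by
          rw [hs, Finset.mul_sum]
          congr 1; funext k
          rw [hP i₀ k, hP k i₀]; ring
      _ = P i₀ i₀ := h1
      _ = l * (w i₀ * conj (w i₀)) := by rw [hP]; ring
  have hls : l * s = 1 := by
    have := mul_left_cancel₀ (mul_ne_zero hl0 hwc)
      (show (l * (w i₀ * conj (w i₀))) * (l * s) = (l * (w i₀ * conj (w i₀))) * 1 by
        rw [mul_one]; linear_combination hE)
    exact this
  set sr : ℝ := ∑ k, Complex.normSq (w k) with hsr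
  have hs_real : s = (sr : ℂ) := by
    rw [hs, hsr]
    push_cast
    congr 1; funext k
    rw [Complex.mul_conj]
  have hsr0 : sr ≠ 0 := by
    intro h
    rw [hs_real, h] at hls
    simp at hls
  have hsrpos : 0 ≤ sr := Finset.sum_nonneg fun k _ => Complex.normSq_nonneg _
  set t : ℝ := (Real.sqrt sr)⁻¹ with ht
  have ht2 : ((t : ℝ) : ℂ) * ((t : ℝ) : ℂ) = l := by
    have h1 : (t : ℝ) * t = sr⁻¹ := by
      rw [ht, ← mul_inv, Real.mul_self_sqrt hsrpos]
    have h2 : l = s⁻¹ := by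
      have hsne : s ≠ 0 := by
        intro h0
        rw [h0, mul_zero] at hls
        exact one_ne_zero hls.symm
      field_simp
      linear_combination hls
    rw [h2, hs_real]
    rw [show (((t:ℝ)):ℂ) * ((t:ℝ):ℂ) = (((t*t : ℝ)):ℂ) by push_cast; ring, h1]
    push_cast
    ring
  refine ⟨fun i => ((t : ℝ) : ℂ) * w i, fun i j => ?_, ?_⟩
  · rw [hP i j, _root_.map_mul, Complex.conj_ofReal, ← ht2]
    ring
  · have : ∑ j, (((t : ℝ) : ℂ) * w j) * conj (((t : ℝ) : ℂ) * w j)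
        = (((t : ℝ) : ℂ) * ((t : ℝ) : ℂ)) * s := by
      rw [hs, Finset.mul_sum]
      congr 1; funext j
      rw [_root_.map_mul, Complex.conj_ofReal]
      ring
    rw [this, ht2, hls]


lemma delta_sum (D : ℂ) (A B : Matrix (Fin n) (Fin n) ℂ) :
    ∑ p : (Fin n × Fin n) × Fin n × Fin n,
        conj (A p.1.1 p.1.2) * B p.2.1 p.2.2
          * (((if p.1.1 = p.1.2 then (1:ℂ) else 0) * (if p.2.2 = p.2.1 then (1:ℂ) else 0)
              + (if p.1.1 = p.2.1 then (1:ℂ) else 0) * (if p.2.2 = p.1.2 then (1:ℂ) else 0)) / D)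
      = ((Aᴴ * B).trace + (Aᴴ).trace * B.trace) / D := by
  classical
  have stepL : ∀ (k : Fin n) (Y : Fin n → ℂ), (∑ l, (if l = k then (1:ℂ) else 0) * Y l) = Y k := by
    intro k Y
    simp [ite_mul]
  have stepJ : ∀ (i : Fin n) (Z : Fin n → ℂ), (∑ j, (if i = j then (1:ℂ) else 0) * Z j) = Z i := by
    intro i Z
    simp [ite_mul]
  simp only [Fintype.sum_prod_type]
  have hsplit : ∀ i j k l : Fin n,
      conj (A i j) * B k l
        * (((if i = j then (1:ℂ) else 0) * (if l = k then (1:ℂ) else 0)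
            + (if i = k then (1:ℂ) else 0) * (if l = j then (1:ℂ) else 0)) / D)
      = (if i = j then (1:ℂ) else 0) * ((if l = k then (1:ℂ) else 0) * (conj (A i j) * B k l / D))
        + (if i = k then (1:ℂ) else 0) * ((if l = j then (1:ℂ) else 0) * (conj (A i j) * B k l / D)) := by
    intro i j k l; ring
  simp_rw [hsplit, Finset.sum_add_distrib, ← Finset.mul_sum, stepL, stepJ]
  rw [add_comm]
  conv_rhs => rw [add_div]
  congr 1
  · simp_rw [← Finset.sum_div]
    congr 1
    rw [Matrix.trace]
    simp only [Matrix.diag_apply, Matrix.mul_apply, Matrix.conjTranspose_apply,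
      Complex.star_def]
    exact Finset.sum_comm
  · simp_rw [← Finset.sum_div]
    congr 1
    rw [Matrix.trace, Matrix.trace]
    simp only [Matrix.diag_apply, Matrix.conjTranspose_apply, Complex.star_def]
    exact (Finset.sum_mul_sum _ _ _ _).symm


lemma main_formula (hn : 0 < n) (A B P₀ : Matrix (Fin n) (Fin n) ℂ)
    (hH : P₀.IsHermitian) (hidem : P₀ * P₀ = P₀) (hrank : P₀.rank = 1) :
    ∫ U : Matrix.unitaryGroup (Fin n) ℂ,
        (starRingEnd ℂ) ((A * (U.1 * P₀ * (U.1)ᴴ)).trace)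
          * (B * (U.1 * P₀ * (U.1)ᴴ)).trace ∂μ
      = ((Aᴴ * B).trace + (Aᴴ).trace * B.trace) / ((n : ℂ) * ((n : ℂ) + 1)) := by
  classical
  obtain ⟨u, hu', hu⟩ := exists_unit_vec P₀ hH hidem hrank
  have hpU : ∀ (U : Matrix.unitaryGroup (Fin n) ℂ) (j i : Fin n),
      (U.1 * P₀ * (U.1)ᴴ) j i = w u U j * conj (w u U i) := by
    intro U j i
    rw [Matrix.mul_apply]
    have hrow : ∀ b, (U.1 * P₀) j b = w u U j * conj (u b) := by
      intro b
      rw [Matrix.mul_apply]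
      simp_rw [hu', ← mul_assoc]
      rw [← Finset.sum_mul]
      rfl
    have hcj : conj (w u U i) = ∑ b, conj (U.1 i b * u b) :=
      map_sum (starRingEnd ℂ) _ _
    simp_rw [hrow, Matrix.conjTranspose_apply]
    rw [hcj, Finset.mul_sum]
    congr 1; funext b
    simp only [_root_.map_mul, Complex.star_def]
    ring
  have hL : ∀ (M : Matrix (Fin n) (Fin n) ℂ) (U : Matrix.unitaryGroup (Fin n) ℂ),
      (M * (U.1 * P₀ * (U.1)ᴴ)).trace
        = ∑ i, ∑ j, M i j * (w u U j * conj (w u U i)) := by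
    intro M U
    simp only [Matrix.trace, Matrix.diag_apply, Matrix.mul_apply, hpU U]
  have hFeq : ∀ U : Matrix.unitaryGroup (Fin n) ℂ,
      (starRingEnd ℂ) ((A * (U.1 * P₀ * (U.1)ᴴ)).trace)
          * (B * (U.1 * P₀ * (U.1)ᴴ)).trace
      = ∑ p : (Fin n × Fin n) × Fin n × Fin n,
          conj (A p.1.1 p.1.2) * B p.2.1 p.2.2
            * mono u p.1.1 p.1.2 p.2.2 p.2.1 U := by
    intro U
    rw [hL A U, hL B U]
    rw [map_sum]
    simp_rw [map_sum]
    rw [Finset.sum_mul_sum]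
    simp_rw [Finset.sum_mul_sum]
    simp only [Fintype.sum_prod_type]
    rw [Finset.sum_congr rfl (fun i _ => Finset.sum_comm)]
    congr 1; funext i
    congr 1; funext j
    congr 1; funext k
    congr 1; funext l
    unfold mono
    simp only [_root_.map_mul, Complex.conj_conj]
    ring
  rw [show (fun U : Matrix.unitaryGroup (Fin n) ℂ =>
      (starRingEnd ℂ) ((A * (U.1 * P₀ * (U.1)ᴴ)).trace)
        * (B * (U.1 * P₀ * (U.1)ᴴ)).trace)
    = fun U => ∑ p : (Fin n × Fin n) × Fin n × Fin n,
        conj (A p.1.1 p.1.2) * B p.2.1 p.2.2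
          * mono u p.1.1 p.1.2 p.2.2 p.2.1 U from funext hFeq]
  rw [integral_finset_sum Finset.univ
    (fun p _ => (integrable_mono u _ _ _ _ μ).const_mul _)]
  simp_rw [integral_const_mul]
  have hTv : ∀ p : (Fin n × Fin n) × Fin n × Fin n,
      (∫ U, mono u p.1.1 p.1.2 p.2.2 p.2.1 U ∂μ)
      = ((if p.1.1 = p.1.2 then (1:ℂ) else 0) * (if p.2.2 = p.2.1 then (1:ℂ) else 0)
          + (if p.1.1 = p.2.1 then (1:ℂ) else 0) * (if p.2.2 = p.1.2 then (1:ℂ) else 0))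
        / ((n : ℂ) * ((n : ℂ) + 1)) :=
    fun p => T_value μ hn u hu p.1.1 p.1.2 p.2.2 p.2.1
  simp_rw [hTv]
  exact delta_sum _ A B

end TraceIntegral


/-- Trace-integral formula:
`∫ conj(tr(A p_U)) tr(B p_U) dμₙ = (tr(AᴴB) + tr(Aᴴ) tr B)/(n(n+1))`. -/
theorem trace_integral_formula (n : ℕ) (hn : 1 ≤ n)
    (A B P₀ : Matrix (Fin n) (Fin n) ℂ) (hP₀ : IsRankOneProj P₀)
    (μ : Measure (Matrix.unitaryGroup (Fin n) ℂ))
    [IsProbabilityMeasure μ] [μ.IsMulLeftInvariant] :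
    ∫ U : Matrix.unitaryGroup (Fin n) ℂ,
        (starRingEnd ℂ) ((A * (U.1 * P₀ * (U.1)ᴴ)).trace)
          * (B * (U.1 * P₀ * (U.1)ᴴ)).trace ∂μ
      = ((Aᴴ * B).trace + (Aᴴ).trace * B.trace) / ((n : ℂ) * ((n : ℂ) + 1)) := by
  exact TraceIntegral.main_formula μ hn A B P₀ hP₀.1 hP₀.2.1 hP₀.2.2
end

section
/- (Core of the Segre pull-back isomorphism.) Let n > 2 and m > 2. The linear map Φ sending a complex matrix M indexed by (Fin n × Fin m) × (Fin n × Fin m) to the function Φ(M)(p,q) := tr(M·(p ⊗ₖ q)) on pairs of rank-one orthogonal projections (p on ℂⁿ, q on ℂᵐ) is injective — i.e., if tr(M·(p ⊗ₖ q)) = 0 for all rank-one orthogonal projections p on ℂⁿ and q on ℂᵐ, then M = 0 — and its range is exactly the linear span of the product functions (p,q) ↦ tr(Ap)·tr(Bq) with A an n×n and B an m×m complex matrix. -/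
open Matrix Kronecker

namespace SegreAux

set_option linter.unusedSectionVars false

variable {k : Type*} [Fintype k] [DecidableEq k]

lemma mulVec_vecMulVec (v w x : k → ℂ) : vecMulVec v w *ᵥ x = (w ⬝ᵥ x) • v := by
  ext i
  simp only [mulVec, dotProduct, vecMulVec_apply, Pi.smul_apply, smul_eq_mul, Finset.sum_mul,
    Finset.mul_sum]
  exact Finset.sum_congr rfl fun j _ => by ring

lemma isRankOneProj_vecMulVec (v : k → ℂ) (hv : star v ⬝ᵥ v = 1) :
    IsRankOneProj (vecMulVec v (star v)) := by
  have hv0 : v ≠ 0 := by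
    rintro rfl
    simp at hv
  refine ⟨?_, ?_, ?_⟩
  · ext i j
    simp [conjTranspose_apply, vecMulVec_apply, mul_comm]
  · ext i j
    simp only [mul_apply, vecMulVec_apply, Pi.star_apply]
    have h : ∀ l, v i * star (v l) * (v l * star (v j)) = star (v l) * v l * (v i * star (v j)) :=
      fun l => by ring
    rw [Finset.sum_congr rfl fun l _ => h l, ← Finset.sum_mul]
    have h2 : ∑ l, star (v l) * v l = (1 : ℂ) := hv
    rw [h2, one_mul]
  · have hr : LinearMap.range (vecMulVec v (star v)).mulVecLin = ℂ ∙ v := by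
      apply le_antisymm
      · rintro _ ⟨x, rfl⟩
        rw [mulVecLin_apply, mulVec_vecMulVec]
        exact Submodule.smul_mem _ _ (Submodule.mem_span_singleton_self v)
      · rw [Submodule.span_singleton_le_iff_mem]
        exact ⟨v, by rw [mulVecLin_apply, mulVec_vecMulVec, hv, one_smul]⟩
    rw [Matrix.rank, hr, finrank_span_singleton hv0]

/-- Any `v vᴴ` with `v ≠ 0` lies in the span of rank-one projections. -/
lemma vecMulVec_mem_span (v : k → ℂ) (hv0 : v ≠ 0) :
    vecMulVec v (star v) ∈ Submodule.span ℂ {p : Matrix k k ℂ | IsRankOneProj p} := by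
  set s : ℝ := ∑ a, Complex.normSq (v a) with hs
  have hsum : star v ⬝ᵥ v = (s : ℂ) := by
    simp only [dotProduct, Pi.star_apply, hs, Complex.ofReal_sum]
    exact Finset.sum_congr rfl fun a _ => by
      rw [RCLike.star_def, mul_comm, Complex.mul_conj]
  have hspos : 0 < s := by
    have hex : ∃ a, v a ≠ 0 := by
      by_contra h
      push_neg at h
      exact hv0 (funext h)
    obtain ⟨a, ha⟩ := hex
    refine Finset.sum_pos' (fun b _ => Complex.normSq_nonneg _) ⟨a, Finset.mem_univ a, ?_⟩
    exact (Complex.normSq_pos).2 ha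
  set r : ℝ := Real.sqrt s with hrdef
  have hrpos : 0 < r := Real.sqrt_pos.2 hspos
  have hr2 : (r : ℝ) ^ 2 = s := Real.sq_sqrt hspos.le
  set u : k → ℂ := (r : ℂ)⁻¹ • v with hu
  have hrne : (r : ℂ) ≠ 0 := by exact_mod_cast hrpos.ne'
  have hnu : star u ⬝ᵥ u = 1 := by
    have hsu : star u = (r : ℂ)⁻¹ • star v := by
      simp [hu, star_smul, Complex.conj_ofReal, Complex.star_def]
    rw [hsu, hu, smul_dotProduct, dotProduct_smul, hsum, smul_eq_mul, smul_eq_mul]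
    field_simp
    rw [← hr2]
    push_cast
    ring
  have key : vecMulVec v (star v) = ((r : ℂ) ^ 2) • vecMulVec u (star u) := by
    ext a b
    simp only [Matrix.smul_apply, vecMulVec_apply, Pi.star_apply, hu, Pi.smul_apply, smul_eq_mul,
      star_mul', Complex.star_def, map_inv₀, Complex.conj_ofReal]
    field_simp
  rw [key]
  exact Submodule.smul_mem _ _ (Submodule.subset_span (isRankOneProj_vecMulVec u hnu))

lemma stdBasisMatrix_eq_combination (i j : k) (hij : ¬ i = j) :
    Matrix.single i j (1 : ℂ) =
      (1/2 : ℂ) • vecMulVec (Pi.single i 1 + Pi.single j 1)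
          (star (Pi.single i 1 + Pi.single j 1 : k → ℂ))
      + (Complex.I/2) • vecMulVec (Pi.single i 1 + Complex.I • (Pi.single j 1 : k → ℂ))
          (star (Pi.single i 1 + Complex.I • (Pi.single j 1 : k → ℂ)))
      - ((1 + Complex.I)/2) • vecMulVec (Pi.single i 1) (star (Pi.single i (1:ℂ)))
      - ((1 + Complex.I)/2) • vecMulVec (Pi.single j 1) (star (Pi.single j (1:ℂ))) := by
  ext a b
  by_cases hai : a = i <;> by_cases haj : a = j <;> by_cases hbi : b = i <;>
    by_cases hbj : b = j <;>
    simp_all [Matrix.single, vecMulVec_apply, Pi.single_apply, eq_comm, Complex.star_def] <;>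
    ring_nf <;>
    simp [Complex.I_sq] <;> ring

lemma stdBasisMatrix_mem_span (i j : k) :
    Matrix.single i j (1 : ℂ) ∈ Submodule.span ℂ {p : Matrix k k ℂ | IsRankOneProj p} := by
  by_cases hij : i = j
  · subst hij
    have h : Matrix.single i i (1 : ℂ) =
        vecMulVec (Pi.single i 1) (star (Pi.single i (1 : ℂ))) := by
      ext a b
      by_cases hai : a = i <;> by_cases hbi : b = i <;>
        simp_all [Matrix.single, vecMulVec_apply, Pi.single_apply, eq_comm]
    rw [h]
    apply vecMulVec_mem_span
    intro h0
    have h1 := congrFun h0 i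
    simp at h1
  · rw [stdBasisMatrix_eq_combination i j hij]
    have hu0 : (Pi.single i 1 + Pi.single j 1 : k → ℂ) ≠ 0 := by
      intro h0
      have h1 := congrFun h0 i
      simp [Pi.single_apply, hij] at h1
    have hw0 : (Pi.single i 1 + Complex.I • (Pi.single j 1 : k → ℂ)) ≠ 0 := by
      intro h0
      have h1 := congrFun h0 i
      simp [Pi.single_apply, hij, Ne.symm hij] at h1
    have hei0 : (Pi.single i 1 : k → ℂ) ≠ 0 := by
      intro h0
      have h1 := congrFun h0 i
      simp at h1
    have hej0 : (Pi.single j 1 : k → ℂ) ≠ 0 := by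
      intro h0
      have h1 := congrFun h0 j
      simp at h1
    exact Submodule.sub_mem _
      (Submodule.sub_mem _
        (Submodule.add_mem _
          (Submodule.smul_mem _ _ (vecMulVec_mem_span _ hu0))
          (Submodule.smul_mem _ _ (vecMulVec_mem_span _ hw0)))
        (Submodule.smul_mem _ _ (vecMulVec_mem_span _ hei0)))
      (Submodule.smul_mem _ _ (vecMulVec_mem_span _ hej0))

lemma mem_span_proj (N : Matrix k k ℂ) :
    N ∈ Submodule.span ℂ {p : Matrix k k ℂ | IsRankOneProj p} := by
  rw [matrix_eq_sum_single N]
  refine Submodule.sum_mem _ fun i _ => Submodule.sum_mem _ fun j _ => ?_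
  rw [show Matrix.single i j (N i j) = N i j • Matrix.single i j (1 : ℂ) by
    rw [smul_single, smul_eq_mul, mul_one]]
  exact Submodule.smul_mem _ _ (stdBasisMatrix_mem_span i j)

lemma trace_mul_stdBasisMatrix (M : Matrix k k ℂ) (x y : k) :
    (M * Matrix.single x y (1 : ℂ)).trace = M y x := by
  simp [Matrix.trace, Matrix.diag, Matrix.mul_apply, Matrix.single, ite_and,
    Finset.sum_ite_eq, Finset.sum_ite_eq']

lemma stdBasisMatrix_kron {l : Type*} [Fintype l] [DecidableEq l] (i j : k) (a b : l) :
    (Matrix.single i j (1:ℂ)) ⊗ₖ (Matrix.single a b (1:ℂ))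
      = Matrix.single (i,a) (j,b) (1:ℂ) := by
  ext ⟨c,d⟩ ⟨e,f⟩
  simp [Matrix.kroneckerMap_apply, Matrix.single, ite_and, Prod.ext_iff]
  aesop

end SegreAux

open SegreAux in
/-- The pull-back, as a linear map. -/
noncomputable def SegrePhi (n m : ℕ) :
    Matrix (Fin n × Fin m) (Fin n × Fin m) ℂ →ₗ[ℂ]
      (({p : Matrix (Fin n) (Fin n) ℂ // IsRankOneProj p}
        × {q : Matrix (Fin m) (Fin m) ℂ // IsRankOneProj q}) → ℂ) where
  toFun M := fun pq =>
    (M * ((pq.1 : Matrix (Fin n) (Fin n) ℂ) ⊗ₖ (pq.2 : Matrix (Fin m) (Fin m) ℂ))).trace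
  map_add' M N := by
    funext pq
    simp [Matrix.add_mul]
  map_smul' c M := by
    funext pq
    simp [Matrix.smul_mul]

open SegreAux in
/-- Core of the Segre pull-back isomorphism: the map `M ↦ ((p,q) ↦ tr(M (p ⊗ₖ q)))`
on pairs of rank-one orthogonal projections is injective, and its range is exactly
the span of the product functions `(p,q) ↦ tr(Ap) tr(Bq)`. -/
theorem segre_pullback_iso (n m : ℕ) (hn : 2 < n) (hm : 2 < m) :
    (∀ M : Matrix (Fin n × Fin m) (Fin n × Fin m) ℂ,
      (∀ (p : Matrix (Fin n) (Fin n) ℂ) (q : Matrix (Fin m) (Fin m) ℂ),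
        IsRankOneProj p → IsRankOneProj q → (M * (p ⊗ₖ q)).trace = 0) → M = 0)
    ∧ (Set.range (fun (M : Matrix (Fin n × Fin m) (Fin n × Fin m) ℂ)
          (pq : {p : Matrix (Fin n) (Fin n) ℂ // IsRankOneProj p}
                × {q : Matrix (Fin m) (Fin m) ℂ // IsRankOneProj q}) =>
          (M * ((pq.1 : Matrix (Fin n) (Fin n) ℂ) ⊗ₖ (pq.2 : Matrix (Fin m) (Fin m) ℂ))).trace)
        = ↑(Submodule.span ℂ
            {g : {p : Matrix (Fin n) (Fin n) ℂ // IsRankOneProj p}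
                 × {q : Matrix (Fin m) (Fin m) ℂ // IsRankOneProj q} → ℂ |
              ∃ (A : Matrix (Fin n) (Fin n) ℂ) (B : Matrix (Fin m) (Fin m) ℂ),
                g = fun pq => (A * (pq.1 : Matrix (Fin n) (Fin n) ℂ)).trace
                              * (B * (pq.2 : Matrix (Fin m) (Fin m) ℂ)).trace})) := by
  constructor
  · -- injectivity
    intro M hM
    have h1 : ∀ (N₁ : Matrix (Fin n) (Fin n) ℂ) (N₂ : Matrix (Fin m) (Fin m) ℂ),
        (M * (N₁ ⊗ₖ N₂)).trace = 0 := by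
      intro N₁ N₂
      have hmain : ∀ N₁ ∈ Submodule.span ℂ {p : Matrix (Fin n) (Fin n) ℂ | IsRankOneProj p},
          ∀ N₂ ∈ Submodule.span ℂ {q : Matrix (Fin m) (Fin m) ℂ | IsRankOneProj q},
          (M * (N₁ ⊗ₖ N₂)).trace = 0 := by
        intro N₁ hN₁
        refine Submodule.span_induction (fun p hp => ?_) ?_ ?_ ?_ hN₁
        · intro N₂ hN₂
          refine Submodule.span_induction (fun q hq => hM p q hp hq) ?_ ?_ ?_ hN₂
          · simp [Matrix.kronecker_zero]
          · intro x y _ _ hx hy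
            rw [Matrix.kronecker_add, Matrix.mul_add, Matrix.trace_add, hx, hy, add_zero]
          · intro c x _ hx
            rw [Matrix.kronecker_smul, Matrix.mul_smul, Matrix.trace_smul, hx, smul_zero]
        · intro N₂ _
          simp [Matrix.zero_kronecker]
        · intro x y _ _ hx hy N₂ hN₂
          rw [Matrix.add_kronecker, Matrix.mul_add, Matrix.trace_add, hx N₂ hN₂, hy N₂ hN₂,
            add_zero]
        · intro c x _ hx N₂ hN₂
          rw [Matrix.smul_kronecker, Matrix.mul_smul, Matrix.trace_smul, hx N₂ hN₂, smul_zero]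
      exact hmain N₁ (mem_span_proj N₁) N₂ (mem_span_proj N₂)
    ext x y
    obtain ⟨a, c⟩ := x
    obtain ⟨b, d⟩ := y
    have h2 := h1 (Matrix.single b a (1:ℂ)) (Matrix.single d c (1:ℂ))
    rw [stdBasisMatrix_kron, trace_mul_stdBasisMatrix] at h2
    simpa using h2
  · -- range
    have hrange : LinearMap.range (SegrePhi n m)
        = Submodule.span ℂ
            {g : {p : Matrix (Fin n) (Fin n) ℂ // IsRankOneProj p}
                 × {q : Matrix (Fin m) (Fin m) ℂ // IsRankOneProj q} → ℂ |
              ∃ (A : Matrix (Fin n) (Fin n) ℂ) (B : Matrix (Fin m) (Fin m) ℂ),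
                g = fun pq => (A * (pq.1 : Matrix (Fin n) (Fin n) ℂ)).trace
                              * (B * (pq.2 : Matrix (Fin m) (Fin m) ℂ)).trace} := by
      apply le_antisymm
      · rintro _ ⟨M, rfl⟩
        rw [matrix_eq_sum_single M, map_sum]
        refine Submodule.sum_mem _ fun x _ => ?_
        rw [map_sum]
        refine Submodule.sum_mem _ fun y _ => ?_
        obtain ⟨a, c⟩ := x
        obtain ⟨b, d⟩ := y
        have hsb : Matrix.single ((a,c) : Fin n × Fin m) ((b,d) : Fin n × Fin m) (M (a,c) (b,d))
            = M (a,c) (b,d) • ((Matrix.single a b (1:ℂ)) ⊗ₖ (Matrix.single c d (1:ℂ))) := by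
          rw [stdBasisMatrix_kron, smul_single, smul_eq_mul, mul_one]
        rw [hsb, _root_.map_smul]
        refine Submodule.smul_mem _ _ (Submodule.subset_span ?_)
        refine ⟨Matrix.single a b (1:ℂ), Matrix.single c d (1:ℂ), ?_⟩
        funext pq
        show ((Matrix.single a b (1:ℂ)) ⊗ₖ (Matrix.single c d (1:ℂ))
            * ((pq.1 : Matrix (Fin n) (Fin n) ℂ) ⊗ₖ (pq.2 : Matrix (Fin m) (Fin m) ℂ))).trace = _
        rw [← Matrix.mul_kronecker_mul, Matrix.trace_kronecker]
      · rw [Submodule.span_le]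
        rintro g ⟨A, B, rfl⟩
        refine ⟨A ⊗ₖ B, ?_⟩
        funext pq
        show ((A ⊗ₖ B)
            * ((pq.1 : Matrix (Fin n) (Fin n) ℂ) ⊗ₖ (pq.2 : Matrix (Fin m) (Fin m) ℂ))).trace = _
        rw [← Matrix.mul_kronecker_mul, Matrix.trace_kronecker]
    have : Set.range ⇑(SegrePhi n m)
        = ↑(Submodule.span ℂ
            {g : {p : Matrix (Fin n) (Fin n) ℂ // IsRankOneProj p}
                 × {q : Matrix (Fin m) (Fin m) ℂ // IsRankOneProj q} → ℂ |
              ∃ (A : Matrix (Fin n) (Fin n) ℂ) (B : Matrix (Fin m) (Fin m) ℂ),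
                g = fun pq => (A * (pq.1 : Matrix (Fin n) (Fin n) ℂ)).trace
                              * (B * (pq.2 : Matrix (Fin m) (Fin m) ℂ)).trace}) := by
      rw [← LinearMap.coe_range, hrange]
    exact this
end

section
/- (Separability of pure states: E vanishes exactly on separable pure states.) Let n > 2 and m > 2, let ψ ∈ ℂ^{Fin n × Fin m} be a unit vector and σ = ψψᴴ the associated pure density matrix. Then tr(σ·(p ⊗ₖ q)) = tr((tr₂σ)·p)·tr((tr₁σ)·q) holds for all rank-one orthogonal projections p on ℂⁿ and q on ℂᵐ if and only if ψ is a product vector, i.e., there exist unit vectors u ∈ ℂⁿ and v ∈ ℂᵐ with ψ(i,k) = u(i)·v(k) for all i, k (equivalently σ = (uuᴴ) ⊗ₖ (vvᴴ)). -/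
open Matrix Kronecker

/-- Partial trace over the second factor. -/
noncomputable def ptrace2 {n m : ℕ} (M : Matrix (Fin n × Fin m) (Fin n × Fin m) ℂ) :
    Matrix (Fin n) (Fin n) ℂ :=
  Matrix.of fun i j => ∑ k : Fin m, M (i, k) (j, k)

/-- Partial trace over the first factor. -/
noncomputable def ptrace1 {n m : ℕ} (M : Matrix (Fin n × Fin m) (Fin n × Fin m) ℂ) :
    Matrix (Fin m) (Fin m) ℂ :=
  Matrix.of fun k l => ∑ i : Fin n, M (i, k) (i, l)

open scoped ComplexConjugate

lemma aux_rankOneProj {k : Type*} [Fintype k] [DecidableEq k] (w : k → ℂ)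
    (hw : star w ⬝ᵥ w = 1) : IsRankOneProj (vecMulVec w (star w)) := by
  have hw0 : w ≠ 0 := by rintro rfl; simp at hw
  have hmul : vecMulVec w (star w) * vecMulVec w (star w) = vecMulVec w (star w) := by
    ext i j
    simp only [Matrix.mul_apply, vecMulVec_apply, Pi.star_apply]
    calc ∑ x, w i * star (w x) * (w x * star (w j))
        = (w i * star (w j)) * ∑ x, star (w x) * w x := by
          rw [Finset.mul_sum]; exact Finset.sum_congr rfl fun x _ => by ring
      _ = w i * star (w j) := by rw [show (∑ x, star (w x) * w x) = 1 from hw]; ring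
  refine ⟨?_, hmul, ?_⟩
  · ext i j
    simp [Matrix.conjTranspose_apply, vecMulVec_apply, mul_comm]
  · have hrange : LinearMap.range (vecMulVec w (star w)).mulVecLin = Submodule.span ℂ {w} := by
      apply le_antisymm
      · rintro y ⟨x, rfl⟩
        have : (vecMulVec w (star w)).mulVecLin x = (star w ⬝ᵥ x) • w := by
          ext i
          simp only [Matrix.mulVecLin_apply, Matrix.mulVec, dotProduct, vecMulVec_apply,
            Pi.smul_apply, smul_eq_mul, Finset.sum_mul, of_apply]
          exact Finset.sum_congr rfl fun x _ => by simp only [Pi.star_apply]; ring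
        rw [this]
        exact Submodule.smul_mem _ _ (Submodule.mem_span_singleton_self w)
      · rw [Submodule.span_singleton_le_iff_mem]
        refine ⟨w, ?_⟩
        ext i
        simp only [Matrix.mulVecLin_apply, Matrix.mulVec, dotProduct, vecMulVec_apply]
        calc ∑ x, w i * star w x * w x = w i * ∑ x, star (w x) * w x := by
              rw [Finset.mul_sum]
              exact Finset.sum_congr rfl fun x _ => by simp only [Pi.star_apply]; ring
          _ = w i := by rw [show (∑ x, star (w x) * w x) = 1 from hw]; ring
    rw [Matrix.rank, hrange, finrank_span_singleton hw0]

lemma aux_traceA {n m : ℕ} (ψ : Fin n × Fin m → ℂ) (w : Fin n → ℂ) (x : Fin m → ℂ) :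
    (vecMulVec ψ (star ψ) * (vecMulVec w (star w) ⊗ₖ vecMulVec x (star x))).trace
    = (∑ α : Fin n × Fin m, ψ α * conj (w α.1) * conj (x α.2)) *
      conj (∑ α : Fin n × Fin m, ψ α * conj (w α.1) * conj (x α.2)) := by
  rw [Matrix.trace]
  simp only [Matrix.diag_apply, Matrix.mul_apply, vecMulVec_apply, kroneckerMap_apply,
    Pi.star_apply]
  calc ∑ α : Fin n × Fin m, ∑ β : Fin n × Fin m,
        ψ α * star (ψ β) * (w β.1 * star (w α.1) * (x β.2 * star (x α.2)))
      = ∑ α : Fin n × Fin m, ∑ β : Fin n × Fin m,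
        (ψ α * conj (w α.1) * conj (x α.2)) * (conj (ψ β) * w β.1 * x β.2) := by
        exact Finset.sum_congr rfl fun α _ => Finset.sum_congr rfl fun β _ => by
          simp only [RCLike.star_def]; ring
    _ = (∑ α : Fin n × Fin m, ψ α * conj (w α.1) * conj (x α.2)) *
        (∑ β : Fin n × Fin m, conj (ψ β) * w β.1 * x β.2) := by
        rw [Finset.sum_mul_sum]
    _ = _ := by
        congr 1
        rw [map_sum]
        exact Finset.sum_congr rfl fun α _ => by simp [mul_comm, mul_assoc, mul_left_comm]

lemma aux_traceB {n m : ℕ} (ψ : Fin n × Fin m → ℂ) (w : Fin n → ℂ) :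
    (ptrace2 (vecMulVec ψ (star ψ)) * vecMulVec w (star w)).trace
    = ∑ k : Fin m, (∑ i : Fin n, ψ (i, k) * conj (w i)) *
        conj (∑ i : Fin n, ψ (i, k) * conj (w i)) := by
  rw [Matrix.trace]
  simp only [Matrix.diag_apply, Matrix.mul_apply, ptrace2, vecMulVec_apply, Matrix.of_apply,
    Pi.star_apply]
  calc ∑ i, ∑ j, (∑ k, ψ (i, k) * star (ψ (j, k))) * (w j * star (w i))
      = ∑ i, ∑ j, ∑ k, (ψ (i, k) * conj (w i)) * (conj (ψ (j, k)) * w j) := by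
        refine Finset.sum_congr rfl fun i _ => Finset.sum_congr rfl fun j _ => ?_
        rw [Finset.sum_mul]
        exact Finset.sum_congr rfl fun k _ => by simp only [RCLike.star_def]; ring
    _ = ∑ i, ∑ k, ∑ j, (ψ (i, k) * conj (w i)) * (conj (ψ (j, k)) * w j) := by
        exact Finset.sum_congr rfl fun i _ => Finset.sum_comm
    _ = ∑ k, ∑ i, ∑ j, (ψ (i, k) * conj (w i)) * (conj (ψ (j, k)) * w j) :=
        Finset.sum_comm
    _ = ∑ k : Fin m, (∑ i : Fin n, ψ (i, k) * conj (w i)) *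
        (∑ j : Fin n, conj (ψ (j, k)) * w j) := by
        exact Finset.sum_congr rfl fun k _ => (Finset.sum_mul_sum _ _ _ _).symm
    _ = _ := by
        refine Finset.sum_congr rfl fun k _ => ?_
        congr 1
        rw [map_sum]
        exact Finset.sum_congr rfl fun i _ => by simp [mul_comm]

lemma aux_traceC {n m : ℕ} (ψ : Fin n × Fin m → ℂ) (x : Fin m → ℂ) :
    (ptrace1 (vecMulVec ψ (star ψ)) * vecMulVec x (star x)).trace
    = ∑ j : Fin n, (∑ k : Fin m, ψ (j, k) * conj (x k)) *
        conj (∑ k : Fin m, ψ (j, k) * conj (x k)) := by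
  rw [Matrix.trace]
  simp only [Matrix.diag_apply, Matrix.mul_apply, ptrace1, vecMulVec_apply, Matrix.of_apply,
    Pi.star_apply]
  calc ∑ k, ∑ l, (∑ j, ψ (j, k) * star (ψ (j, l))) * (x l * star (x k))
      = ∑ k, ∑ l, ∑ j, (ψ (j, k) * conj (x k)) * (conj (ψ (j, l)) * x l) := by
        refine Finset.sum_congr rfl fun k _ => Finset.sum_congr rfl fun l _ => ?_
        rw [Finset.sum_mul]
        exact Finset.sum_congr rfl fun j _ => by simp only [RCLike.star_def]; ring
    _ = ∑ k, ∑ j, ∑ l, (ψ (j, k) * conj (x k)) * (conj (ψ (j, l)) * x l) := by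
        exact Finset.sum_congr rfl fun k _ => Finset.sum_comm
    _ = ∑ j, ∑ k, ∑ l, (ψ (j, k) * conj (x k)) * (conj (ψ (j, l)) * x l) :=
        Finset.sum_comm
    _ = ∑ j : Fin n, (∑ k : Fin m, ψ (j, k) * conj (x k)) *
        (∑ l : Fin m, conj (ψ (j, l)) * x l) := by
        exact Finset.sum_congr rfl fun j _ => (Finset.sum_mul_sum _ _ _ _).symm
    _ = _ := by
        refine Finset.sum_congr rfl fun j _ => ?_
        congr 1
        rw [map_sum]
        exact Finset.sum_congr rfl fun l _ => by simp [mul_comm]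
lemma aux_keylemma {n m : ℕ} (ψ : Fin n × Fin m → ℂ)
    (H : ∀ (i : Fin n) (x : Fin m → ℂ), star x ⬝ᵥ x = 1 →
      (∑ k, ψ (i,k) * conj (x k)) * conj (∑ k, ψ (i,k) * conj (x k))
      = (∑ k, ψ (i,k) * conj (ψ (i,k))) *
        ∑ j, (∑ k, ψ (j,k) * conj (x k)) * conj (∑ k, ψ (j,k) * conj (x k))) :
    ∀ (i : Fin n) (k l : Fin m), ψ (i,k) * conj (ψ (i,l))
      = (∑ k', ψ (i,k') * conj (ψ (i,k'))) * ∑ j, ψ (j,k) * conj (ψ (j,l)) := by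
  have Hsingle : ∀ (i : Fin n) (k : Fin m),
      ψ (i,k) * conj (ψ (i,k))
      = (∑ k', ψ (i,k') * conj (ψ (i,k'))) * ∑ j, ψ (j,k) * conj (ψ (j,k)) := by
    intro i k
    have hx : star (Pi.single k 1 : Fin m → ℂ) ⬝ᵥ (Pi.single k 1) = 1 := by
      simp [dotProduct, Pi.single_apply, apply_ite, Finset.sum_ite_eq]
    have h := H i (Pi.single k 1) hx
    simpa [Pi.single_apply, apply_ite conj, ite_mul, mul_ite, Finset.sum_ite_eq] using h
  intro i k l
  by_cases hkl : k = l
  · subst hkl; exact Hsingle i k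
  set A := ψ (i,k) with hA
  set B := ψ (i,l) with hB
  set r := ∑ k', ψ (i,k') * conj (ψ (i,k')) with hr
  set Ck := ∑ j, ψ (j,k) * conj (ψ (j,k)) with hCk
  set Cl := ∑ j, ψ (j,l) * conj (ψ (j,l)) with hCl
  set S := ∑ j, ψ (j,k) * conj (ψ (j,l)) with hS
  set S' := ∑ j, ψ (j,l) * conj (ψ (j,k)) with hS'
  have E : ∀ c1 c2 : ℂ, conj c1 * c1 + conj c2 * c2 = 1 →
      (conj c1 * A + conj c2 * B) * (c1 * conj A + c2 * conj B)
      = r * (conj c1 * c1 * Ck + conj c1 * c2 * S + conj c2 * c1 * S' + conj c2 * c2 * Cl) := by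
    intro c1 c2 hc
    set x : Fin m → ℂ := fun t => if t = k then c1 else if t = l then c2 else 0 with hxdef
    have hpt : ∀ t : Fin m, star (x t) * (x t)
        = (if t = k then conj c1 * c1 else 0) + (if t = l then conj c2 * c2 else 0) := by
      intro t
      simp only [hxdef]
      by_cases h1 : t = k
      · subst h1
        simp [hkl, RCLike.star_def]
      · by_cases h2 : t = l
        · subst h2
          simp [h1, RCLike.star_def]
        · simp [h1, h2]
    have hx : star x ⬝ᵥ x = 1 := by
      rw [← hc]
      simp only [dotProduct, Pi.star_apply]
      rw [Finset.sum_congr rfl fun t _ => hpt t, Finset.sum_add_distrib,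
        Finset.sum_ite_eq', Finset.sum_ite_eq']
      simp
    have hBpt : ∀ (j : Fin n) (t : Fin m), ψ (j,t) * conj (x t)
        = (if t = k then ψ (j,t) * conj c1 else 0) + (if t = l then ψ (j,t) * conj c2 else 0) := by
      intro j t
      simp only [hxdef]
      by_cases h1 : t = k
      · subst h1
        simp [hkl]
      · by_cases h2 : t = l
        · subst h2
          simp [h1]
        · simp [h1, h2]
    have hBj : ∀ j : Fin n, (∑ k', ψ (j,k') * conj (x k'))
        = conj c1 * ψ (j,k) + conj c2 * ψ (j,l) := by
      intro j
      rw [Finset.sum_congr rfl fun t _ => hBpt j t, Finset.sum_add_distrib,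
        Finset.sum_ite_eq', Finset.sum_ite_eq']
      simp [mul_comm]
    have h := H i x hx
    rw [hBj i] at h
    rw [Finset.sum_congr rfl (fun (j : Fin n) _ => by rw [hBj j])] at h
    have hsum : (∑ j, (conj c1 * ψ (j,k) + conj c2 * ψ (j,l)) *
        conj (conj c1 * ψ (j,k) + conj c2 * ψ (j,l)))
        = conj c1 * c1 * Ck + conj c1 * c2 * S + conj c2 * c1 * S' + conj c2 * c2 * Cl := by
      rw [hCk, hCl, hS, hS', Finset.mul_sum, Finset.mul_sum, Finset.mul_sum, Finset.mul_sum]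
      rw [← Finset.sum_add_distrib, ← Finset.sum_add_distrib, ← Finset.sum_add_distrib]
      refine Finset.sum_congr rfl fun j _ => ?_
      simp only [map_add, _root_.map_mul, Complex.conj_conj]
      ring
    rw [hsum] at h
    rw [← h]
    simp only [map_add, _root_.map_mul, Complex.conj_conj]
    rfl
  have e1 := Hsingle i k
  have e2 := Hsingle i l
  rw [← hA, ← hr, ← hCk] at e1
  rw [← hB, ← hr, ← hCl] at e2
  have e3 := E (3/5) (4/5) (by norm_num [map_div₀, map_ofNat])
  have e4 := E (3/5) ((4/5) * Complex.I) (by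
    simp only [_root_.map_mul, map_div₀, map_ofNat, Complex.conj_I]
    ring_nf
    rw [Complex.I_sq]
    norm_num)
  simp only [map_div₀, _root_.map_mul, map_ofNat, Complex.conj_I] at e3 e4
  have f3 : A * conj B + B * conj A = r * S + r * S' := by
    linear_combination (25/12) * e3 - (3/4) * e1 - (4/3) * e2
  have f4 : Complex.I * (A * conj B) - Complex.I * (B * conj A)
      = r * (Complex.I * S) - r * (Complex.I * S') := by
    linear_combination (25/12) * e4 - (3/4) * e1 + (4/3) * Complex.I * Complex.I * e2
  have g : Complex.I * (A * conj B) = Complex.I * (r * S) := by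
    linear_combination (Complex.I/2) * f3 + (1/2) * f4
  exact mul_left_cancel₀ Complex.I_ne_zero g

/-- Separability of pure states: for a pure state `σ = ψψᴴ`, the defect
`tr(σ(p ⊗ₖ q)) = tr((tr₂σ)p)·tr((tr₁σ)q)` holds for all rank-one orthogonal
projections `p`, `q` iff `ψ` is a product vector. -/
theorem pure_separability (n m : ℕ) (hn : 2 < n) (hm : 2 < m)
    (ψ : Fin n × Fin m → ℂ) (hψ : star ψ ⬝ᵥ ψ = 1)
    (σ : Matrix (Fin n × Fin m) (Fin n × Fin m) ℂ)
    (hσ : σ = Matrix.vecMulVec ψ (star ψ)) :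
    (∀ (p : Matrix (Fin n) (Fin n) ℂ) (q : Matrix (Fin m) (Fin m) ℂ),
        IsRankOneProj p → IsRankOneProj q →
        (σ * (p ⊗ₖ q)).trace = (ptrace2 σ * p).trace * (ptrace1 σ * q).trace)
      ↔ ∃ (u : Fin n → ℂ) (v : Fin m → ℂ),
          star u ⬝ᵥ u = 1 ∧ star v ⬝ᵥ v = 1 ∧
          ∀ (i : Fin n) (k : Fin m), ψ (i, k) = u i * v k := by
  subst hσ
  constructor
  · intro hyp
    have H : ∀ (i : Fin n) (x : Fin m → ℂ), star x ⬝ᵥ x = 1 →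
        (∑ k, ψ (i,k) * conj (x k)) * conj (∑ k, ψ (i,k) * conj (x k))
        = (∑ k, ψ (i,k) * conj (ψ (i,k))) *
          ∑ j, (∑ k, ψ (j,k) * conj (x k)) * conj (∑ k, ψ (j,k) * conj (x k)) := by
      intro i x hx
      have hw : star (Pi.single i 1 : Fin n → ℂ) ⬝ᵥ Pi.single i 1 = 1 := by
        simp [dotProduct, Pi.single_apply, apply_ite, Finset.sum_ite_eq]
      have h := hyp _ _ (aux_rankOneProj _ hw) (aux_rankOneProj _ hx)
      rw [aux_traceA, aux_traceB, aux_traceC] at h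
      rw [show (∑ α : Fin n × Fin m, ψ α * conj ((Pi.single i 1 : Fin n → ℂ) α.1) * conj (x α.2))
          = ∑ k, ψ (i,k) * conj (x k) from by
        rw [Fintype.sum_prod_type]
        simp [Pi.single_apply, apply_ite conj, ite_mul, Finset.sum_ite_eq]] at h
      rw [show (∑ k : Fin m, (∑ j, ψ (j,k) * conj ((Pi.single i 1 : Fin n → ℂ) j)) *
            conj (∑ j, ψ (j,k) * conj ((Pi.single i 1 : Fin n → ℂ) j)))
          = ∑ k, ψ (i,k) * conj (ψ (i,k)) from by
        simp [Pi.single_apply, apply_ite conj, ite_mul, mul_ite, Finset.sum_ite_eq]] at h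
      exact h
    have key := aux_keylemma ψ H
    have htot : ∑ α : Fin n × Fin m, conj (ψ α) * ψ α = 1 := by
      simpa [dotProduct] using hψ
    have hex : ∃ α : Fin n × Fin m, ψ α ≠ 0 := by
      by_contra hall
      push_neg at hall
      rw [Finset.sum_congr rfl (fun α _ => by rw [hall α, map_zero, zero_mul])] at htot
      simp at htot
    obtain ⟨⟨i₀, k₀⟩, h00⟩ := hex
    set r : Fin n → ℂ := fun i => ∑ k', ψ (i,k') * conj (ψ (i,k')) with hrdef
    set C0 : ℂ := ∑ j, ψ (j,k₀) * conj (ψ (j,k₀)) with hC0def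
    have h4 : ψ (i₀,k₀) * conj (ψ (i₀,k₀)) = r i₀ * C0 := key i₀ k₀ k₀
    have hns : ψ (i₀,k₀) * conj (ψ (i₀,k₀)) ≠ 0 := by
      simp [Complex.mul_conj, Complex.normSq_eq_zero, h00]
    have hr0 : r i₀ ≠ 0 := fun h => hns (by rw [h4, h, zero_mul])
    have hC0 : C0 ≠ 0 := fun h => hns (by rw [h4, h, mul_zero])
    set R : ℝ := ∑ k', Complex.normSq (ψ (i₀,k')) with hRdef
    have hrR : r i₀ = (R : ℂ) := by
      rw [hrdef, hRdef]
      push_cast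
      exact Finset.sum_congr rfl fun k' _ => (Complex.mul_conj (ψ (i₀,k')))
    have hRpos : 0 < R := by
      rw [hRdef]
      have := Complex.normSq_pos.mpr h00
      exact Finset.sum_pos' (fun k' _ => Complex.normSq_nonneg _)
        ⟨k₀, Finset.mem_univ _, this⟩
    set sR : ℝ := Real.sqrt R with hsRdef
    have hsRpos : 0 < sR := Real.sqrt_pos.mpr hRpos
    have hsRne : (sR : ℂ) ≠ 0 := by
      simpa using Complex.ofReal_ne_zero.mpr hsRpos.ne'
    have hsRsq : (sR : ℂ) * (sR : ℂ) = (R : ℂ) := by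
      rw [← Complex.ofReal_mul, Real.mul_self_sqrt hRpos.le]
    have minor : ∀ (i : Fin n) (k : Fin m),
        ψ (i,k) * ψ (i₀,k₀) = ψ (i,k₀) * ψ (i₀,k) := by
      intro i k
      by_cases h0 : ψ (i,k₀) = 0
      · have hri : r i * C0 = 0 := by rw [← key i k₀ k₀, h0, zero_mul]
        have hri0 : r i = 0 := by
          rcases mul_eq_zero.mp hri with h | h
          · exact h
          · exact absurd h hC0
        have hik : ψ (i,k) = 0 := by
          have hkk : ψ (i,k) * conj (ψ (i,k)) = r i * ∑ j, ψ (j,k) * conj (ψ (j,k)) :=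
            key i k k
          rw [hri0, zero_mul] at hkk
          have this := hkk
          have := Complex.normSq_eq_zero.mp (by
            have h' : (Complex.normSq (ψ (i,k)) : ℂ) = 0 := by
              rw [← Complex.mul_conj]; exact this
            exact_mod_cast h')
          exact this
        rw [hik, h0, zero_mul, zero_mul]
      · set S : ℂ := ∑ j, ψ (j,k) * conj (ψ (j,k₀)) with hSdef
        have h1 : ψ (i,k) * conj (ψ (i,k₀)) = r i * S := key i k k₀
        have h2 : ψ (i₀,k) * conj (ψ (i₀,k₀)) = r i₀ * S := key i₀ k k₀
        have h3 : ψ (i,k₀) * conj (ψ (i,k₀)) = r i * C0 := key i k₀ k₀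
        have hcc : conj (ψ (i,k₀)) * conj (ψ (i₀,k₀)) ≠ 0 :=
          mul_ne_zero (by simpa using h0) (by simpa using h00)
        apply mul_right_cancel₀ hcc
        calc ψ (i,k) * ψ (i₀,k₀) * (conj (ψ (i,k₀)) * conj (ψ (i₀,k₀)))
            = (ψ (i,k) * conj (ψ (i,k₀))) * (ψ (i₀,k₀) * conj (ψ (i₀,k₀))) := by ring
          _ = (r i * S) * (r i₀ * C0) := by rw [h1, h4]
          _ = (r i * C0) * (r i₀ * S) := by ring
          _ = (ψ (i,k₀) * conj (ψ (i,k₀))) * (ψ (i₀,k) * conj (ψ (i₀,k₀))) := by rw [h3, h2]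
          _ = ψ (i,k₀) * ψ (i₀,k) * (conj (ψ (i,k₀)) * conj (ψ (i₀,k₀))) := by ring
    refine ⟨fun i => ψ (i,k₀) * ((sR : ℂ) / ψ (i₀,k₀)), fun k => ψ (i₀,k) / (sR : ℂ), ?_, ?_, ?_⟩
    · have hC0R : ψ (i₀,k₀) * conj (ψ (i₀,k₀)) = (R : ℂ) * C0 := by rw [h4, hrR]
      calc star (fun i => ψ (i,k₀) * ((sR : ℂ) / ψ (i₀,k₀))) ⬝ᵥ
            (fun i => ψ (i,k₀) * ((sR : ℂ) / ψ (i₀,k₀)))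
          = ∑ i, (ψ (i,k₀) * conj (ψ (i,k₀))) *
              (((sR : ℂ) * (sR : ℂ)) / (ψ (i₀,k₀) * conj (ψ (i₀,k₀)))) := by
            simp only [dotProduct, Pi.star_apply, RCLike.star_def]
            refine Finset.sum_congr rfl fun i _ => ?_
            simp only [_root_.map_mul, map_div₀, Complex.conj_ofReal]
            ring
        _ = C0 * (((sR : ℂ) * (sR : ℂ)) / (ψ (i₀,k₀) * conj (ψ (i₀,k₀)))) := by
            rw [← Finset.sum_mul, ← hC0def]
        _ = 1 := by
            rw [hC0R, hsRsq]
            have hR : (R : ℂ) ≠ 0 := by exact_mod_cast hRpos.ne'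
            field_simp
    · calc star (fun k => ψ (i₀,k) / (sR : ℂ)) ⬝ᵥ (fun k => ψ (i₀,k) / (sR : ℂ))
          = ∑ k', (ψ (i₀,k') * conj (ψ (i₀,k'))) / ((sR : ℂ) * (sR : ℂ)) := by
            simp only [dotProduct, Pi.star_apply, RCLike.star_def]
            refine Finset.sum_congr rfl fun k' _ => ?_
            simp only [map_div₀, Complex.conj_ofReal]
            ring
        _ = (r i₀) / ((sR : ℂ) * (sR : ℂ)) := by
            rw [← Finset.sum_div, hrdef]
        _ = 1 := by
            rw [hrR, hsRsq]
            have hR : (R : ℂ) ≠ 0 := by exact_mod_cast hRpos.ne'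
            field_simp
    · intro i k
      have := minor i k
      field_simp
      linear_combination this
  · rintro ⟨u, v, hu, hv, huv⟩ p q _ _
    have hvsum : ∑ k, conj (v k) * v k = 1 := by simpa [dotProduct] using hv
    have husum : ∑ i, conj (u i) * u i = 1 := by simpa [dotProduct] using hu
    have hL : (vecMulVec ψ (star ψ) * (p ⊗ₖ q)).trace
        = (∑ i, ∑ j, conj (u j) * p j i * u i) * (∑ k, ∑ l, conj (v l) * q l k * v k) := by
      rw [Matrix.trace]
      simp only [Matrix.diag_apply, Matrix.mul_apply, vecMulVec_apply, kroneckerMap_apply,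
        Pi.star_apply]
      calc ∑ α : Fin n × Fin m, ∑ β : Fin n × Fin m,
            ψ α * star (ψ β) * (p β.1 α.1 * q β.2 α.2)
          = ∑ α : Fin n × Fin m, (∑ j, conj (u j) * p j α.1 * u α.1) *
              (∑ l, conj (v l) * q l α.2 * v α.2) := by
            refine Finset.sum_congr rfl fun α _ => ?_
            rw [Fintype.sum_prod_type, Finset.sum_mul_sum]
            refine Finset.sum_congr rfl fun j _ => Finset.sum_congr rfl fun l _ => ?_
            rw [show ψ α = u α.1 * v α.2 from huv α.1 α.2, show ψ (j, l) = u j * v l from huv j l]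
            simp only [RCLike.star_def, _root_.map_mul]
            ring
        _ = _ := by
            rw [Fintype.sum_prod_type, Finset.sum_mul_sum]
    have hR2 : (ptrace2 (vecMulVec ψ (star ψ)) * p).trace
        = ∑ i, ∑ j, conj (u j) * p j i * u i := by
      rw [Matrix.trace]
      simp only [Matrix.diag_apply, Matrix.mul_apply, ptrace2, vecMulVec_apply, Matrix.of_apply,
        Pi.star_apply]
      refine Finset.sum_congr rfl fun i _ => Finset.sum_congr rfl fun j _ => ?_
      calc (∑ k, ψ (i, k) * star (ψ (j, k))) * p j i
          = ((u i * conj (u j)) * ∑ k, conj (v k) * v k) * p j i := by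
            congr 1
            rw [Finset.mul_sum]
            refine Finset.sum_congr rfl fun k _ => ?_
            rw [huv i k, huv j k]
            simp only [RCLike.star_def, _root_.map_mul]
            ring
        _ = conj (u j) * p j i * u i := by rw [hvsum]; ring
    have hR1 : (ptrace1 (vecMulVec ψ (star ψ)) * q).trace
        = ∑ k, ∑ l, conj (v l) * q l k * v k := by
      rw [Matrix.trace]
      simp only [Matrix.diag_apply, Matrix.mul_apply, ptrace1, vecMulVec_apply, Matrix.of_apply,
        Pi.star_apply]
      refine Finset.sum_congr rfl fun k _ => Finset.sum_congr rfl fun l _ => ?_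
      calc (∑ i, ψ (i, k) * star (ψ (i, l))) * q l k
          = ((v k * conj (v l)) * ∑ i, conj (u i) * u i) * q l k := by
            congr 1
            rw [Finset.mul_sum]
            refine Finset.sum_congr rfl fun i _ => ?_
            rw [huv i k, huv i l]
            simp only [RCLike.star_def, _root_.map_mul]
            ring
        _ = conj (v l) * q l k * v k := by rw [husum]; ring
    rw [hL, hR2, hR1]
end
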